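/- Let v : [0,∞) → X be differentiable at t with v(t) ≠ 0. Then the upper right Dini derivative of t ↦ ‖v(t)‖ at t equals [v'(t), v(t)] / ‖v(t)‖, where [·,·] is the right semi-inner-product. Equivalently, ‖v(t)‖² · D⁺_t‖v(t)‖ = [v'(t), v(t)] · ‖v(t)‖. -/

import Mathlib

open Filter Topology

/-- Right defined semi-inner-product. -/
noncomputable def sip {X : Type*} [NormedAddCommGroup X] [NormedSpace ℝ X] (u v : X) : ℝ :=
  (limUnder (𝓝[>] (0 : ℝ)) fun ε : ℝ => (‖v + ε • u‖ - ‖v‖) / ε) * ‖v‖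

/-- Upper right Dini derivative `D⁺_t f(t) = limsup_{ε→0⁺} (f(t+ε)-f(t))/ε`. -/
noncomputable def diniDeriv (f : ℝ → ℝ) (t : ℝ) : ℝ :=
  limsup (fun ε : ℝ => (f (t + ε) - f t) / ε) (𝓝[>] (0 : ℝ))

open Set in
lemma convexOn_norm_affine {X : Type*} [NormedAddCommGroup X] [NormedSpace ℝ X] (u w : X) :
    ConvexOn ℝ univ (fun ε : ℝ => ‖w + ε • u‖) := by
  have h := (convexOn_univ_norm (E := X)).comp_affineMap (AffineMap.lineMap w (w + u))
  have : (norm ∘ ⇑(AffineMap.lineMap w (w + u))) = fun ε : ℝ => ‖w + ε • u‖ := by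
    funext ε
    simp [AffineMap.lineMap_apply, add_sub_cancel_left, Function.comp, add_comm]
  rwa [this] at h

open Set in
lemma slope_tendsto {X : Type*} [NormedAddCommGroup X] [NormedSpace ℝ X] (u w : X) :
    ∃ L : ℝ, Tendsto (fun ε : ℝ => (‖w + ε • u‖ - ‖w‖) / ε) (𝓝[>] 0) (𝓝 L) := by
  set s : ℝ → ℝ := fun ε => (‖w + ε • u‖ - ‖w‖) / ε with hs
  have hmono : MonotoneOn s (Ioi (0 : ℝ)) := by
    intro a ha b hb hab
    have := (convexOn_norm_affine u w).secant_mono (a := 0) (x := a) (y := b)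
      (mem_univ _) (mem_univ _) (mem_univ _) (ne_of_gt ha) (ne_of_gt hb) hab
    simpa [hs] using this
  have hbdd : BddBelow (s '' Ioi 0) := by
    refine ⟨-‖u‖, ?_⟩
    rintro x ⟨ε, hε, rfl⟩
    have hε' : (0:ℝ) < ε := hε
    have h1 : ‖w‖ - ε * ‖u‖ ≤ ‖w + ε • u‖ := by
      have := norm_add_le (w + ε • u) (-(ε • u))
      simp only [add_neg_cancel_right, norm_neg, norm_smul, Real.norm_eq_abs,
        abs_of_pos hε'] at this
      linarith
    have : -‖u‖ ≤ (‖w + ε • u‖ - ‖w‖) / ε := by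
      rw [le_div_iff₀ hε']; nlinarith
    simpa [hs] using this
  exact ⟨_, hmono.tendsto_nhdsGT hbdd⟩

theorem dini_deriv_norm_eq {X : Type*} [NormedAddCommGroup X] [NormedSpace ℝ X]
    (v : ℝ → X) (t : ℝ) (ht : 0 ≤ t) (v' : X) (hv : HasDerivAt v v' t)
    (hne : v t ≠ 0) :
    diniDeriv (fun s => ‖v s‖) t = sip v' (v t) / ‖v t‖ ∧
      ‖v t‖ ^ 2 * diniDeriv (fun s => ‖v s‖) t = sip v' (v t) * ‖v t‖ := by
  obtain ⟨L, hL⟩ := slope_tendsto v' (v t)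
  -- remainder tends to 0 along 𝓝[>] 0
  have hrem : Tendsto (fun ε : ℝ => ‖v (t + ε) - v t - ε • v'‖ / ε) (𝓝[>] 0) (𝓝 0) := by
    have h0 := hasDerivAt_iff_tendsto.mp hv
    have hcomp : Tendsto (fun ε : ℝ => t + ε) (𝓝[>] 0) (𝓝 t) := by
      have : Tendsto (fun ε : ℝ => t + ε) (𝓝 0) (𝓝 t) := by
        simpa using (tendsto_const_nhds.add tendsto_id :
          Tendsto (fun ε : ℝ => t + ε) (𝓝 0) (𝓝 (t + 0)))
      exact this.mono_left nhdsWithin_le_nhds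
    have h1 : Tendsto (fun ε : ℝ => ‖(t + ε) - t‖⁻¹ * ‖v (t + ε) - v t - ((t + ε) - t) • v'‖)
        (𝓝[>] 0) (𝓝 0) := h0.comp hcomp
    apply h1.congr'
    filter_upwards [self_mem_nhdsWithin] with ε (hε : 0 < ε)
    rw [add_sub_cancel_left, Real.norm_eq_abs, abs_of_pos hε]
    rw [div_eq_inv_mul]
  -- difference of Dini quotient and sip slope tends to 0
  have hdiff : Tendsto (fun ε : ℝ => (‖v (t + ε)‖ - ‖v t‖) / ε
      - (‖v t + ε • v'‖ - ‖v t‖) / ε) (𝓝[>] 0) (𝓝 0) := by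
    apply squeeze_zero_norm' _ hrem
    filter_upwards [self_mem_nhdsWithin] with ε (h : 0 < ε)
    have heq : (‖v (t + ε)‖ - ‖v t‖) / ε - (‖v t + ε • v'‖ - ‖v t‖) / ε
        = (‖v (t + ε)‖ - ‖v t + ε • v'‖) / ε := by ring
    rw [heq, Real.norm_eq_abs, abs_div, abs_of_pos h]
    have hle : |‖v (t + ε)‖ - ‖v t + ε • v'‖| ≤ ‖v (t + ε) - v t - ε • v'‖ := by
      have := abs_norm_sub_norm_le (v (t + ε)) (v t + ε • v')
      have h2 : v (t + ε) - (v t + ε • v') = v (t + ε) - v t - ε • v' := by abel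
      rwa [h2] at this
    gcongr
  -- the Dini quotient tends to L
  have hD : Tendsto (fun ε : ℝ => (‖v (t + ε)‖ - ‖v t‖) / ε) (𝓝[>] 0) (𝓝 L) := by
    have := hdiff.add hL
    simpa using this
  have hdini : diniDeriv (fun s => ‖v s‖) t = L := by
    unfold diniDeriv
    exact hD.limsup_eq
  have hsip : sip v' (v t) = L * ‖v t‖ := by
    unfold sip
    rw [hL.limUnder_eq]
  have hn : ‖v t‖ ≠ 0 := norm_ne_zero_iff.mpr hne
  constructor
  · rw [hdini, hsip]
    field_simp
  · rw [hdini, hsip]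
    ring
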